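/- arXiv:math/0603196 — 2 statements merged into one kernel-verified Lean document; each statement's English description precedes it below -/
import Mathlib

section
/- Fix q ∈ ℂ with 0 < |q| < 1 and an integer n ≥ 1. Then for every u ∈ ℂ∖{0}, the product of Θ(ζu) over all n-th roots of unity ζ ∈ ℂ equals ϑⁿ₀(u): ∏_{ζⁿ=1} Θ(ζu) = (1 − u^{−n})·∏_{k≥1}(1 − q^{nk}uⁿ)(1 − q^{nk}u^{−n}) = ϑⁿ₀(u). -/
open Complex Filter Topology Polynomial

lemma prod_nthRoots_sub (n : ℕ) (hn : 1 ≤ n) (x : ℂ) :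
    ((nthRoots n (1 : ℂ)).map fun ζ => x - ζ).prod = x ^ n - 1 := by
  have hmonic : (X ^ n - C (1 : ℂ)).Monic := monic_X_pow_sub_C 1 (by omega)
  have hsplits : Splits (X ^ n - C (1 : ℂ)) := IsAlgClosed.splits _
  have h := hsplits.eq_prod_roots_of_monic hmonic
  have h2 := congrArg (Polynomial.eval x) h
  rw [eval_multiset_prod, Multiset.map_map] at h2
  simp only [Function.comp, eval_sub, eval_pow, eval_X, eval_C, eval_one] at h2
  rw [nthRoots]
  rw [← h2]

lemma card_nthRoots_one' (n : ℕ) (hn : 1 ≤ n) :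
    Multiset.card (nthRoots n (1 : ℂ)) = n :=
  (Complex.isPrimitiveRoot_exp n (by omega)).card_nthRoots_one

lemma prod_one_sub_mul (n : ℕ) (hn : 1 ≤ n) (c : ℂ) :
    ((nthRoots n (1 : ℂ)).map fun ζ => 1 - c * ζ).prod = 1 - c ^ n := by
  rcases eq_or_ne c 0 with rfl | hc
  · simp [zero_pow (by omega : n ≠ 0), Multiset.map_const', Multiset.prod_replicate]
  · have h1 : ((nthRoots n (1 : ℂ)).map fun ζ => 1 - c * ζ) =
        (nthRoots n (1 : ℂ)).map fun ζ => c * (c⁻¹ - ζ) := by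
      refine Multiset.map_congr rfl fun ζ _ => ?_
      field_simp
    rw [h1, Multiset.prod_map_mul, Multiset.map_const', Multiset.prod_replicate,
      card_nthRoots_one' n hn, prod_nthRoots_sub n hn c⁻¹]
    field_simp
    rw [one_div, mul_sub, ← mul_pow, mul_inv_cancel₀ hc, one_pow, mul_one]

lemma prod_one_sub_mul_inv (n : ℕ) (hn : 1 ≤ n) (c : ℂ) :
    ((nthRoots n (1 : ℂ)).map fun ζ => 1 - c * ζ⁻¹).prod = 1 - c ^ n := by
  have h1 : ((nthRoots n (1 : ℂ)).map fun ζ => 1 - c * ζ⁻¹) =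
      (nthRoots n (1 : ℂ)).map fun ζ => ζ⁻¹ * (ζ - c) := by
    refine Multiset.map_congr rfl fun ζ hζ => ?_
    have hζn : ζ ^ n = 1 := (mem_nthRoots (by omega : 0 < n)).1 hζ
    have hζ0 : ζ ≠ 0 := by
      intro h; rw [h] at hζn; simp [zero_pow (by omega : n ≠ 0)] at hζn
    field_simp
  rw [h1, Multiset.prod_map_mul, Multiset.prod_map_inv]
  have hsub : ((nthRoots n (1 : ℂ)).map fun ζ => ζ - c) =
      (nthRoots n (1 : ℂ)).map fun ζ => (-1) * (c - ζ) := by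
    refine Multiset.map_congr rfl fun ζ _ => by ring
  rw [hsub, Multiset.prod_map_mul, Multiset.map_const', Multiset.prod_replicate,
    card_nthRoots_one' n hn, prod_nthRoots_sub n hn c]
  have hP : ((nthRoots n (1 : ℂ)).map fun ζ => ζ).prod = -(-1 : ℂ) ^ n := by
    have h0 := prod_nthRoots_sub n hn 0
    have h0' : ((nthRoots n (1 : ℂ)).map fun ζ => (0 : ℂ) - ζ) =
        (nthRoots n (1 : ℂ)).map fun ζ => (-1) * ζ :=
      Multiset.map_congr rfl fun ζ _ => by ring
    rw [h0', Multiset.prod_map_mul, Multiset.map_const', Multiset.prod_replicate,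
      card_nthRoots_one' n hn, zero_pow (by omega : n ≠ 0)] at h0
    have h2 : ((-1 : ℂ)) ^ n * ((-1 : ℂ)) ^ n = 1 := by
      rw [← mul_pow]; norm_num
    linear_combination ((-1 : ℂ)) ^ n * h0 - (((nthRoots n (1:ℂ)).map fun ζ => ζ).prod) * h2
  rw [hP]
  have h2 : ((-1 : ℂ)) ^ n * ((-1 : ℂ)) ^ n = 1 := by rw [← mul_pow]; norm_num
  rw [inv_neg, ← inv_pow, inv_neg_one]
  linear_combination (1 - c ^ n) * h2

lemma multipliable_one_sub_geom (r c : ℂ) (hr : ‖r‖ < 1) :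
    Multipliable (fun k : ℕ => 1 - c * r ^ (k + 1)) := by
  by_cases h0 : ∃ k : ℕ, 1 - c * r ^ (k + 1) = 0
  · obtain ⟨k0, hk0⟩ := h0
    refine ⟨0, ?_⟩
    have hev : ∀ᶠ s : Finset ℕ in atTop, ∏ i ∈ s, (1 - c * r ^ (i + 1)) = 0 := by
      filter_upwards [Filter.eventually_ge_atTop {k0}] with s hs
      exact Finset.prod_eq_zero (hs (Finset.mem_singleton_self k0)) hk0
    exact Tendsto.congr' (hev.mono fun s hs => hs.symm) tendsto_const_nhds
  · push_neg at h0
    have hsum : Summable (fun k : ℕ => Complex.log (1 - c * r ^ (k + 1))) := by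
      have hg : Summable (fun k : ℕ =>
          (3 / 2 * ‖c‖ * ‖r‖) * ‖r‖ ^ k) :=
        (summable_geometric_of_lt_one (norm_nonneg r) hr).mul_left _
      refine Summable.of_norm_bounded_eventually_nat hg ?_
      have hten : Tendsto (fun k : ℕ => ‖c‖ * ‖r‖ ^ (k + 1))
          atTop (𝓝 0) := by
        have h1 : Tendsto (fun k : ℕ => ‖r‖ ^ (k + 1)) atTop (𝓝 0) :=
          (tendsto_pow_atTop_nhds_zero_of_lt_one (norm_nonneg r) hr).comp
            (tendsto_add_atTop_nat 1)
        simpa using h1.const_mul (‖c‖)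
      filter_upwards [hten.eventually_lt_const (by norm_num : (0:ℝ) < 1/2)] with k hk
      have hz : ‖-(c * r ^ (k + 1))‖ ≤ 1 / 2 := by
        rw [norm_neg, norm_mul, norm_pow]
        simpa using hk.le
      have hb := Complex.norm_log_one_add_half_le_self hz
      rw [show (1 : ℂ) + -(c * r ^ (k + 1)) = 1 - c * r ^ (k + 1) by ring] at hb
      refine hb.trans (le_of_eq ?_)
      rw [norm_neg, norm_mul, norm_pow]
      ring
    exact Complex.multipliable_of_summable_log hsum

lemma multipliable_one_sub_geom' (r c : ℂ) (hr : ‖r‖ < 1) :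
    Multipliable (fun k : ℕ => 1 - r ^ (k + 1) * c) :=
  (multipliable_one_sub_geom r c hr).congr fun k => by ring

lemma multiset_prod_tprod (s : Multiset ℂ) (f : ℂ → ℕ → ℂ)
    (hf : ∀ a, Multipliable (f a)) :
    Multipliable (fun k => (s.map fun a => f a k).prod) ∧
      (s.map fun a => ∏' k, f a k).prod = ∏' k, (s.map fun a => f a k).prod := by
  induction s using Multiset.induction_on with
  | empty =>
    constructor
    · simpa using (multipliable_one : Multipliable fun _ : ℕ => (1:ℂ))
    · simp [tprod_one]
  | cons a s ih =>
    simp only [Multiset.map_cons, Multiset.prod_cons]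
    refine ⟨(hf a).mul ih.1, ?_⟩
    rw [ih.2, ← Multipliable.tprod_mul (hf a) ih.1]

def posEquiv (n : ℕ) (hn : 1 ≤ n) : ℕ ≃ {ℓ : ℤ // 1 ≤ ℓ ∧ (n : ℤ) ∣ ℓ - 0} where
  toFun k := ⟨(n : ℤ) * (k + 1), by
    constructor
    · have h1 : (1 : ℤ) ≤ n := by exact_mod_cast hn
      have h2 : (1 : ℤ) ≤ (k : ℤ) + 1 := by omega
      nlinarith
    · exact ⟨k + 1, by ring⟩⟩
  invFun ℓ := ((ℓ : ℤ) / n - 1).toNat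
  left_inv k := by
    have hn0 : (n : ℤ) ≠ 0 := by exact_mod_cast (by omega : n ≠ 0)
    simp only [Int.mul_ediv_cancel_left _ hn0]
    omega
  right_inv := by
    rintro ⟨ℓ, h1, hd⟩
    obtain ⟨m, hm⟩ := hd
    have hm' : ℓ = (n : ℤ) * m := by omega
    have hn0 : (n : ℤ) ≠ 0 := by exact_mod_cast (by omega : n ≠ 0)
    have hnpos : (0 : ℤ) < n := by positivity
    have hm1 : 1 ≤ m := by nlinarith
    apply Subtype.ext
    simp only [hm', Int.mul_ediv_cancel_left _ hn0]
    have : ((m - 1).toNat : ℤ) = m - 1 := Int.toNat_of_nonneg (by omega)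
    rw [this]
    ring

def nonposEquiv (n : ℕ) (hn : 1 ≤ n) : ℕ ≃ {ℓ : ℤ // ℓ ≤ 0 ∧ (n : ℤ) ∣ ℓ - 0} where
  toFun k := ⟨-((n : ℤ) * k), by
    constructor
    · have : (0 : ℤ) ≤ (n : ℤ) * k := by positivity
      omega
    · exact ⟨-k, by ring⟩⟩
  invFun ℓ := (-(ℓ : ℤ) / n).toNat
  left_inv k := by
    have hn0 : (n : ℤ) ≠ 0 := by exact_mod_cast (by omega : n ≠ 0)
    simp only [neg_neg, Int.mul_ediv_cancel_left _ hn0]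
    omega
  right_inv := by
    rintro ⟨ℓ, h1, hd⟩
    obtain ⟨m, hm⟩ := hd
    have hm' : ℓ = (n : ℤ) * m := by omega
    have hn0 : (n : ℤ) ≠ 0 := by exact_mod_cast (by omega : n ≠ 0)
    have hnpos : (0 : ℤ) < n := by positivity
    have hm1 : m ≤ 0 := by nlinarith
    apply Subtype.ext
    have hneg : -ℓ = (n : ℤ) * (-m) := by rw [hm']; ring
    simp only [hneg, Int.mul_ediv_cancel_left _ hn0]
    have : (((-m)).toNat : ℤ) = -m := Int.toNat_of_nonneg (by omega)
    rw [this]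
    omega
open Complex Filter Topology

/-- The basic theta function `Θ(u) = (1 − u⁻¹)·∏_{k≥1}(1 − qᵏu)(1 − qᵏu⁻¹)` on `ℂ∖{0}`. -/
noncomputable def Theta (q u : ℂ) : ℂ :=
  (1 - u⁻¹) * ∏' k : ℕ, ((1 - q ^ (k + 1) * u) * (1 - q ^ (k + 1) * u⁻¹))

/-- `ϑⁿₐ(u) = ∏_{ℓ≥1, ℓ≡a mod n}(1 − q^ℓ uⁿ) · ∏_{ℓ≤0, ℓ≡a mod n}(1 − q^{−ℓ} u^{−n})`. -/
noncomputable def thetaNA (q : ℂ) (n : ℕ) (a : ℤ) (u : ℂ) : ℂ :=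
  (∏' ℓ : {ℓ : ℤ // 1 ≤ ℓ ∧ (n : ℤ) ∣ ℓ - a}, (1 - q ^ (ℓ : ℤ) * u ^ (n : ℤ))) *
  (∏' ℓ : {ℓ : ℤ // ℓ ≤ 0 ∧ (n : ℤ) ∣ ℓ - a}, (1 - q ^ (-(ℓ : ℤ)) * u ^ (-(n : ℤ))))

set_option maxHeartbeats 1000000 in
/-- for `0 < |q| < 1`, `n ≥ 1` and `u ≠ 0`, the product of `Θ(ζu)` over all
`n`-th roots of unity `ζ` equals
`(1 − u^{−n})·∏_{k≥1}(1 − q^{nk}uⁿ)(1 − q^{nk}u^{−n}) = ϑⁿ₀(u)`. -/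
theorem prod_theta_roots_of_unity
    (q : ℂ) (hq0 : 0 < ‖q‖) (hq1 : ‖q‖ < 1)
    (n : ℕ) (hn : 1 ≤ n) (u : ℂ) (hu : u ≠ 0) :
    ((Polynomial.nthRoots n (1 : ℂ)).map fun ζ => Theta q (ζ * u)).prod =
        (1 - u ^ (-(n : ℤ))) *
          ∏' k : ℕ, ((1 - q ^ (n * (k + 1)) * u ^ n) *
            (1 - q ^ (n * (k + 1)) * u ^ (-(n : ℤ)))) ∧
      (1 - u ^ (-(n : ℤ))) *
          ∏' k : ℕ, ((1 - q ^ (n * (k + 1)) * u ^ n) *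
            (1 - q ^ (n * (k + 1)) * u ^ (-(n : ℤ)))) = thetaNA q n 0 u := by
  have hqn : ‖q ^ n‖ < 1 := by
    rw [norm_pow]; exact pow_lt_one₀ (norm_nonneg q) hq1 (by omega)
  have hA : Multipliable (fun k : ℕ => 1 - q ^ (n * (k + 1)) * u ^ n) := by
    refine (multipliable_one_sub_geom' (q ^ n) (u ^ n) hqn).congr fun k => ?_
    rw [← pow_mul]
  have hB : Multipliable (fun k : ℕ => 1 - q ^ (n * (k + 1)) * u ^ (-(n : ℤ))) := by
    refine (multipliable_one_sub_geom' (q ^ n) (u ^ (-(n : ℤ))) hqn).congr fun k => ?_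
    rw [← pow_mul]
  constructor
  · have hTheta : ∀ ζ : ℂ, Theta q (ζ * u) =
        (1 - u⁻¹ * ζ⁻¹) *
          ∏' k : ℕ, ((1 - (q ^ (k + 1) * u) * ζ) * (1 - (q ^ (k + 1) * u⁻¹) * ζ⁻¹)) := by
      intro ζ
      unfold Theta
      rw [mul_inv]
      congr 1
      · ring
      · exact tprod_congr fun k => by ring
    rw [Multiset.map_congr rfl fun ζ _ => hTheta ζ, Multiset.prod_map_mul]
    have hfirst : ((nthRoots n (1 : ℂ)).map fun ζ => 1 - u⁻¹ * ζ⁻¹).prod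
        = 1 - u ^ (-(n : ℤ)) := by
      rw [prod_one_sub_mul_inv n hn u⁻¹, inv_pow, ← zpow_natCast u n, ← zpow_neg]
    have hswap := multiset_prod_tprod (nthRoots n (1 : ℂ))
      (fun ζ k => (1 - (q ^ (k + 1) * u) * ζ) * (1 - (q ^ (k + 1) * u⁻¹) * ζ⁻¹))
      (fun ζ => Multipliable.mul
        ((multipliable_one_sub_geom q (u * ζ) hq1).congr fun k => by ring)
        ((multipliable_one_sub_geom q (u⁻¹ * ζ⁻¹) hq1).congr fun k => by ring))
    rw [hfirst, hswap.2]
    congr 1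
    refine tprod_congr fun k => ?_
    rw [Multiset.prod_map_mul, prod_one_sub_mul n hn _, prod_one_sub_mul_inv n hn _]
    rw [mul_pow, mul_pow, ← pow_mul, inv_pow, ← zpow_natCast u n, ← zpow_neg,
      mul_comm (k + 1) n]
  · have h2 : thetaNA q n 0 u =
        (∏' k : ℕ, (1 - q ^ (n * (k + 1)) * u ^ n)) *
          ((1 - u ^ (-(n : ℤ))) *
            ∏' k : ℕ, (1 - q ^ (n * (k + 1)) * u ^ (-(n : ℤ)))) := by
      rw [thetaNA]
      congr 1
      · rw [← (posEquiv n hn).tprod_eq]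
        refine tprod_congr fun k => ?_
        simp only [posEquiv, Equiv.coe_fn_mk]
        rw [show ((n : ℤ) * ((k : ℤ) + 1)) = ((n * (k + 1) : ℕ) : ℤ) by push_cast; ring,
          zpow_natCast, zpow_natCast]
      · rw [← (nonposEquiv n hn).tprod_eq]
        have hcong : (∏' k : ℕ, (1 - q ^ (-(((nonposEquiv n hn) k : ℤ))) * u ^ (-(n : ℤ))))
            = ∏' k : ℕ, (1 - q ^ (n * k) * u ^ (-(n : ℤ))) := by
          refine tprod_congr fun k => ?_
          simp only [nonposEquiv, Equiv.coe_fn_mk]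
          rw [neg_neg, show ((n : ℤ) * (k : ℤ)) = ((n * k : ℕ) : ℤ) by push_cast; ring,
            zpow_natCast]
        rw [hcong]
        refine (tprod_eq_zero_mul'
          (f := fun m : ℕ => 1 - q ^ (n * m) * u ^ (-(n : ℤ))) hB).trans ?_
        congr 1
        show 1 - q ^ (n * 0) * u ^ (-(n : ℤ)) = 1 - u ^ (-(n : ℤ))
        norm_num
    rw [h2, Multipliable.tprod_mul hA hB]
    ring
end

section
/- Let L ⊆ L₀ be lattices in ℂ with [L₀ : L] = n, χ : L₀/L → ℂˣ a homomorphism, and f a Jacobi function with character χ whose divisor is −1 on L₀, +1 on r + L₀ (r ∉ L₀, n·r ∈ L), and 0 elsewhere, normalized so that z·f(z) → 1 as z → 0; let c ∈ ℂˣ satisfy f(u)f(r−u) = c for all admissible u. Let m be a positive integer, let s ∈ ℂ satisfy m·s − r ∈ L, and let h ∈ ℂ satisfy m·h ∈ L₀. Then z ↦ 1/f(mz) has a simple pole at z = s + h with residue −χ(−m·h mod L)/(m·c); that is, (z − (s+h))/f(mz) tends to −χ(−m·h mod L)/(m·c) as z → s+h. -/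
open Complex Filter Topology
open scoped Classical

/-- A lattice in `ℂ`: an additive subgroup generated by two `ℝ`-linearly
independent complex numbers. -/
def IsComplexLattice (L : AddSubgroup ℂ) : Prop :=
  ∃ ω₁ ω₂ : ℂ, LinearIndependent ℝ ![ω₁, ω₂] ∧ L = AddSubgroup.closure {ω₁, ω₂}

lemma IsComplexLattice.discrete {L : AddSubgroup ℂ} (hL : IsComplexLattice L) :
    DiscreteTopology L := by
  obtain ⟨ω₁, ω₂, hind, hLeq⟩ := hL
  have hcard : Fintype.card (Fin 2) = Module.finrank ℝ ℂ := by
    simp [Complex.finrank_real_complex]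
  let b := basisOfLinearIndependentOfCardEqFinrank hind hcard
  have hb : Set.range b = ({ω₁, ω₂} : Set ℂ) := by
    rw [coe_basisOfLinearIndependentOfCardEqFinrank]
    rw [Matrix.range_cons_cons_empty]
  have hLeq' : L = (Submodule.span ℤ (Set.range b)).toAddSubgroup := by
    rw [hLeq, Submodule.span_int_eq_addSubgroupClosure, hb]
  rw [hLeq']
  infer_instance

lemma IsComplexLattice.isClosed {L : AddSubgroup ℂ} (hL : IsComplexLattice L) :
    IsClosed (L : Set ℂ) := by
  have := hL.discrete
  exact AddSubgroup.isClosed_of_discrete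

lemma IsComplexLattice.isolated {L : AddSubgroup ℂ} (hL : IsComplexLattice L)
    {g : ℂ} (hg : g ∈ L) : ∀ᶠ z in 𝓝[≠] g, z ∉ L := by
  have hd := hL.discrete
  have hopen : IsOpen ({(⟨g, hg⟩ : L)} : Set L) := isOpen_discrete _
  rw [isOpen_induced_iff] at hopen
  obtain ⟨t, ht, hts⟩ := hopen
  have hgt : g ∈ t := by
    have : (⟨g, hg⟩ : L) ∈ (Subtype.val ⁻¹' t : Set L) := by rw [hts]; rfl
    exact this
  filter_upwards [nhdsWithin_le_nhds (ht.mem_nhds hgt), self_mem_nhdsWithin]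
    with z hzt hzne hzL
  have hmem : (⟨z, hzL⟩ : L) ∈ (Subtype.val ⁻¹' t : Set L) := hzt
  rw [hts] at hmem
  exact hzne (congrArg Subtype.val hmem)

lemma tendsto_affine_punct (a b x : ℂ) (ha : a ≠ 0) :
    Tendsto (fun z : ℂ => a * z + b) (𝓝[≠] x) (𝓝[≠] (a * x + b)) := by
  rw [tendsto_nhdsWithin_iff]
  constructor
  · exact tendsto_nhdsWithin_of_tendsto_nhds (Continuous.tendsto (by continuity) x)
  · filter_upwards [self_mem_nhdsWithin] with z hz
    simp only [Set.mem_compl_iff, Set.mem_singleton_iff] at hz ⊢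
    intro hcon
    exact hz (mul_left_cancel₀ ha (by linear_combination hcon))

/-- residues of `1/f(mz)`.  Let `f` be the normalized Jacobi function with
character `χ` (a homomorphism `L₀/L → ℂˣ`, encoded as a function on `ℂ` multiplicative
on `L₀` and `L`-invariant), with divisor `−1` on `L₀`, `+1` on `r + L₀` (`r ∉ L₀`,
`n·r ∈ L`), normalized so that `z·f(z) → 1` as `z → 0`, and with modulus `c` at `r`.
If `m·s − r ∈ L` and `m·h ∈ L₀`, then `z ↦ 1/f(mz)` has a simple pole at `s + h` with
residue `−χ(−m·h)/(m·c)`. -/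
theorem residue_of_inv_jacobi
    (L L₀ : AddSubgroup ℂ) (hL : IsComplexLattice L) (hL₀ : IsComplexLattice L₀)
    (hLL₀ : L ≤ L₀) (n : ℕ) (hn : L.relIndex L₀ = n)
    (χ : ℂ → ℂˣ)
    (hχ_hom : ∀ g ∈ L₀, ∀ g' ∈ L₀, χ (g + g') = χ g * χ g')
    (hχ_per : ∀ g ∈ L₀, ∀ w ∈ L, χ (g + w) = χ g)
    (f : ℂ → ℂ) (hf : ∀ z : ℂ, MeromorphicAt f z)
    (hper : ∀ ω ∈ L, ∀ z : ℂ, f (z + ω) = f z)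
    (r : ℂ) (hr₁ : r ∉ L₀) (hr₂ : (n : ℂ) * r ∈ L)
    (hdiv : ∀ z : ℂ, ∀ hz : MeromorphicAt f z,
      meromorphicOrderAt f z = (if z ∈ L₀ then (-1 : ℤ) else if z - r ∈ L₀ then 1 else 0 : ℤ))
    (hjac : ∀ g ∈ L₀, ∀ u : ℂ, AnalyticAt ℂ f u → f (u + g) = χ g * f u)
    (hnorm : Tendsto (fun z : ℂ => z * f z) (𝓝[≠] 0) (𝓝 1))
    (c : ℂˣ)
    (hc : ∀ u : ℂ, u ∉ L₀ → u - r ∉ L₀ → f u * f (r - u) = c)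
    (m : ℕ) (hm : 0 < m)
    (s : ℂ) (hs : (m : ℂ) * s - r ∈ L)
    (h : ℂ) (hh : (m : ℂ) * h ∈ L₀) :
    Tendsto (fun z : ℂ => (z - (s + h)) / f ((m : ℂ) * z)) (𝓝[≠] (s + h))
      (𝓝 (-(χ (-((m : ℂ) * h)) : ℂ) / ((m : ℂ) * (c : ℂ)))) := by
  set g : ℂ := (m : ℂ) * h with hg_def
  set lam : ℂ := (m : ℂ) * s - r with hlam_def
  have hgL₀ : g ∈ L₀ := hh
  have hlamL : lam ∈ L := hs
  have hm0 : (m : ℂ) ≠ 0 := Nat.cast_ne_zero.2 hm.ne'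
  have hc0 : (c : ℂ) ≠ 0 := c.ne_zero
  have hmg : -g ∈ L₀ := neg_mem hgL₀
  -- Step 1: u * f (u - g) → χ(-g) as u → 0
  have T1 : Tendsto (fun u : ℂ => u * f (u - g)) (𝓝[≠] (0:ℂ)) (𝓝 (χ (-g) : ℂ)) := by
    have base : Tendsto (fun u : ℂ => (χ (-g) : ℂ) * (u * f u)) (𝓝[≠] (0:ℂ))
        (𝓝 ((χ (-g) : ℂ) * 1)) := tendsto_const_nhds.mul hnorm
    rw [mul_one] at base
    refine base.congr' ?_
    filter_upwards [(hf 0).eventually_analyticAt] with u hu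
    have hj := hjac (-g) hmg u hu
    rw [← sub_eq_add_neg] at hj
    rw [hj]; ring
  -- Step 2: (t + g) * f t → χ(-g) as t → -g
  have map2 : Tendsto (fun t : ℂ => t + g) (𝓝[≠] (-g)) (𝓝[≠] (0:ℂ)) := by
    have := tendsto_affine_punct 1 g (-g) one_ne_zero
    simpa using this
  have T2 : Tendsto (fun t : ℂ => (t + g) * f t) (𝓝[≠] (-g)) (𝓝 (χ (-g) : ℂ)) := by
    refine (T1.comp map2).congr (fun t => ?_)
    simp [Function.comp, add_sub_cancel_right]
  -- Step 3: (v - (r+g)) * f (r - v) → -χ(-g) as v → r+g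
  have map3 : Tendsto (fun v : ℂ => r - v) (𝓝[≠] (r + g)) (𝓝[≠] (-g)) := by
    have h' := tendsto_affine_punct (-1) r (r + g) (by norm_num)
    have he : (-1 : ℂ) * (r + g) + r = -g := by ring
    rw [he] at h'
    refine h'.congr (fun v => ?_)
    ring
  have T3 : Tendsto (fun v : ℂ => (v - (r + g)) * f (r - v)) (𝓝[≠] (r + g))
      (𝓝 (-(χ (-g) : ℂ))) := by
    refine ((T2.comp map3).neg).congr (fun v => ?_)
    simp only [Function.comp]
    ring
  -- Step 4: (v - (r+g)) / f v → -χ(-g)/c as v → r+g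
  have hrgL₀ : r + g ∉ L₀ := fun hcon => hr₁ (by simpa using sub_mem hcon hgL₀)
  have ev1 : ∀ᶠ v in 𝓝[≠] (r + g), v ∉ L₀ :=
    nhdsWithin_le_nhds (hL₀.isClosed.isOpen_compl.mem_nhds hrgL₀)
  have ev2 : ∀ᶠ v in 𝓝[≠] (r + g), r - v ∉ L₀ := map3.eventually (hL₀.isolated hmg)
  have T4 : Tendsto (fun v : ℂ => (v - (r + g)) / f v) (𝓝[≠] (r + g))
      (𝓝 (-(χ (-g) : ℂ) / c)) := by
    have base := T3.mul_const ((c : ℂ)⁻¹)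
    rw [div_eq_mul_inv]
    refine base.congr' ?_
    filter_upwards [ev1, ev2] with v hv1 hv2
    have hv1' : (r - v) - r ∉ L₀ := by
      intro hx
      have hx' : -v ∈ L₀ := by simpa using hx
      exact hv1 (by simpa using neg_mem hx')
    have hcv := hc (r - v) hv2 hv1'
    rw [sub_sub_cancel] at hcv
    have hfv : f v ≠ 0 := by
      intro h0
      rw [h0, mul_zero] at hcv
      exact hc0 hcv.symm
    field_simp
    linear_combination (v - (r + g)) * hcv
  -- Step 5: transfer to z ↦ (z - (s+h))/f(mz)
  have map5 : Tendsto (fun z : ℂ => (m : ℂ) * z - lam) (𝓝[≠] (s + h)) (𝓝[≠] (r + g)) := by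
    have h' := tendsto_affine_punct (m : ℂ) (-lam) (s + h) hm0
    have he : (m : ℂ) * (s + h) + (-lam) = r + g := by rw [hlam_def, hg_def]; ring
    rw [he] at h'
    refine h'.congr (fun z => ?_)
    ring
  have T5 := T4.comp map5
  have hval : -(χ (-g) : ℂ) / ((m : ℂ) * c) = (m : ℂ)⁻¹ * (-(χ (-g) : ℂ) / c) := by
    field_simp
  rw [hval]
  refine (tendsto_const_nhds.mul T5).congr (fun z => ?_)
  simp only [Function.comp]
  have hfp : f ((m : ℂ) * z - lam) = f ((m : ℂ) * z) := by
    conv_rhs => rw [show (m : ℂ) * z = ((m : ℂ) * z - lam) + lam by ring]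
    rw [hper lam hlamL]
  rw [hfp]
  have hnum : ((m : ℂ) * z - lam) - (r + g) = (m : ℂ) * (z - (s + h)) := by
    rw [hlam_def, hg_def]; ring
  rw [hnum, ← mul_div_assoc, inv_mul_cancel_left₀ hm0]
end
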